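/- (Theorem 2.) Let m ≥ 1 be an integer, N = 2^m, and let M be the SAFFRON matrix. Let d ≥ 1 be an integer with d < N, let 𝒢 be a Boolean matrix with rows indexed by Fin h (h ≥ 1) and columns indexed by Fin N that is (d−1)-disjunct, and let G ⊆ Fin N with |G| ≤ d. For w ∈ Fin h and i ∈ Fin (2m), let b w i be the i-th entry of ⋁_{j ∈ G, 𝒢 w j = true} M_j (the noiseless block outcomes). Let p₀ ∈ (0, 1], λ ∈ (0, 1), ξ > 0 with 1/2 + ξ ≤ (1 − λ)·p₀, and δ ∈ (0, 1). Let c ≥ 1 be an integer with c ≥ 2·ln(2·h·m/δ)/(p₀·λ²), and let Y : (Fin h × Fin (2m) × Fin c) → Ω → Bool be a mutually independent family of Boolean random variables on a probability space (Ω, μ) with μ({ω : Y (w, i, s) ω = b w i}) ≥ p₀ for all w, i, s. For ω ∈ Ω define the majority-decoded block vectors v_w(ω) : Fin (2m) → Bool by v_w(ω) i = true iff 2·|{s : Y (w, i, s) ω = true}| > c. Then μ({ω : {j ∈ Fin N : ∃ w ∈ Fin h, v_w(ω) = M_j} = G}) ≥ 1 − δ; that is, with probability at least 1 − δ the decoding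 procedure outputs exactly the defective set G. -/

import Mathlib

open MeasureTheory ProbabilityTheory

/-- A Boolean matrix `T` (rows indexed by `ρ`, columns by `κ`) is `d`-disjunct if for
every column `j₀` and every finite set `S` of `d` columns not containing `j₀`, some row
has a `true` in column `j₀` and `false` in all columns of `S`. -/
def Disjunct {ρ κ : Type*} (T : ρ → κ → Bool) (d : ℕ) : Prop :=
  ∀ j₀ : κ, ∀ S : Finset κ, S.card = d → j₀ ∉ S →
    ∃ i : ρ, T i j₀ = true ∧ ∀ j ∈ S, T i j = false

/-- The SAFFRON matrix for `N = 2 ^ m`: rows indexed by `Fin (2 * m)`, columns by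
`Fin (2 ^ m)`; row `i < m` is the `i`-th bit of the column index, row `m ≤ i < 2m`
is the complement of the `(i - m)`-th bit. -/
def saffron (m : ℕ) (i : Fin (2 * m)) (j : Fin (2 ^ m)) : Bool :=
  if (i : ℕ) < m then Nat.testBit (j : ℕ) (i : ℕ) else !Nat.testBit (j : ℕ) ((i : ℕ) - m)


lemma saffron_lo (m : ℕ) (k : ℕ) (hk : k < m) (j : Fin (2 ^ m)) :
    saffron m ⟨k, by omega⟩ j = Nat.testBit (j : ℕ) k := by
  simp [saffron, hk]

lemma saffron_hi (m : ℕ) (k : ℕ) (hk : k < m) (j : Fin (2 ^ m)) :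
    saffron m ⟨m + k, by omega⟩ j = !Nat.testBit (j : ℕ) k := by
  simp only [saffron]
  rw [if_neg (by omega), Nat.add_sub_cancel_left]

lemma det_decode (m : ℕ) (hm : 1 ≤ m) {d h : ℕ}
    (hd : 1 ≤ d) (hdN : d < 2 ^ m) (hh : 1 ≤ h)
    (𝒢 : Fin h → Fin (2 ^ m) → Bool) (h𝒢 : Disjunct 𝒢 (d - 1))
    (G : Finset (Fin (2 ^ m))) (hG : G.card ≤ d)
    (v : Fin h → Fin (2 * m) → Bool)
    (hv : ∀ w i, v w i = decide (∃ j ∈ G, 𝒢 w j = true ∧ saffron m i j = true))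
    (j : Fin (2 ^ m)) :
    (∃ w : Fin h, v w = fun i => saffron m i j) ↔ j ∈ G := by
  constructor
  · rintro ⟨w, hw⟩
    -- every j' ∈ G with 𝒢 w j' = true equals j
    have key : ∀ j' ∈ G, 𝒢 w j' = true → j' = j := by
      intro j' hj' hgw
      have hbit : ∀ k, Nat.testBit (j' : ℕ) k = Nat.testBit (j : ℕ) k := by
        intro k
        rcases lt_or_ge k m with hk | hk
        · have hlo : v w ⟨k, by omega⟩ = Nat.testBit (j : ℕ) k := by
            rw [hw]; exact saffron_lo m k hk j
          have hhi : v w ⟨m + k, by omega⟩ = !Nat.testBit (j : ℕ) k := by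
            rw [hw]; exact saffron_hi m k hk j
          rcases Bool.eq_false_or_eq_true (Nat.testBit (j : ℕ) k) with hb | hb
          · -- bit of j is true: row m+k must be false
            rw [hb] at hhi
            simp only [Bool.not_true] at hhi
            rw [hv, decide_eq_false_iff_not] at hhi
            rw [hb]
            by_contra hne
            refine hhi ⟨j', hj', hgw, ?_⟩
            rw [saffron_hi m k hk j']
            simp only [Bool.not_eq_true] at hne ⊢
            simpa using hne
          · -- bit of j is false: row k must be false, so all gated columns have bit false
            rw [hb] at hlo
            rw [hv, decide_eq_false_iff_not] at hlo
            rw [hb]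
            by_contra hne
            exact hlo ⟨j', hj', hgw, by rw [saffron_lo m k hk j']; simpa using hne⟩
        · have h1 : Nat.testBit (j' : ℕ) k = false :=
            Nat.testBit_lt_two_pow (lt_of_lt_of_le j'.isLt (Nat.pow_le_pow_right (by norm_num) hk))
          have h2 : Nat.testBit (j : ℕ) k = false :=
            Nat.testBit_lt_two_pow (lt_of_lt_of_le j.isLt (Nat.pow_le_pow_right (by norm_num) hk))
          rw [h1, h2]
      exact Fin.ext (Nat.eq_of_testBit_eq hbit)
    -- the gated set is nonempty
    have hne : ∃ j' ∈ G, 𝒢 w j' = true := by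
      by_contra hcon
      push_neg at hcon
      have hall : ∀ i, v w i = false := by
        intro i
        rw [hv]
        simp only [decide_eq_false_iff_not, not_exists]
        rintro j' ⟨hj', hg, _⟩
        exact absurd hg (by simpa using hcon j' hj')
      have h0 : v w ⟨0, by omega⟩ = Nat.testBit (j : ℕ) 0 := by
        rw [hw]; exact saffron_lo m 0 hm j
      have h0' : v w ⟨m + 0, by omega⟩ = !Nat.testBit (j : ℕ) 0 := by
        rw [hw]; exact saffron_hi m 0 hm j
      rw [hall] at h0 h0'
      rw [← h0] at h0'
      simp at h0'
    obtain ⟨j', hj', hgw⟩ := hne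
    have := key j' hj' hgw
    subst this
    exact hj'
  · intro hj
    -- build a padding set of size d - 1 containing G.erase j, avoiding j
    have hsub : G.erase j ⊆ Finset.univ.erase j := by
      intro x hx
      simp only [Finset.mem_erase] at hx ⊢
      exact ⟨hx.1, Finset.mem_univ x⟩
    have hcard1 : (G.erase j).card ≤ d - 1 := by
      have := Finset.card_erase_of_mem hj
      omega
    have hcard2 : d - 1 ≤ (Finset.univ.erase j).card := by
      rw [Finset.card_erase_of_mem (Finset.mem_univ j), Finset.card_univ, Fintype.card_fin]
      omega
    obtain ⟨S, hS1, hS2, hS3⟩ := Finset.exists_subsuperset_card_eq hsub hcard1 hcard2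
    have hjS : j ∉ S := fun hjs => by
      have := hS2 hjs
      simp at this
    obtain ⟨w, hw1, hw2⟩ := h𝒢 j S hS3 hjS
    refine ⟨w, funext fun i => ?_⟩
    show v w i = saffron m i j
    rw [hv]
    rcases Bool.eq_false_or_eq_true (saffron m i j) with hb | hb
    · rw [hb]
      simp only [decide_eq_true_eq]
      exact ⟨j, hj, hw1, hb⟩
    · rw [hb]
      rw [decide_eq_false_iff_not]
      rintro ⟨j', hj', hg, hs⟩
      rcases eq_or_ne j' j with rfl | hne
      · rw [hb] at hs; cases hs
      · have : j' ∈ S := hS1 (Finset.mem_erase.mpr ⟨hne, hj'⟩)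
        rw [hw2 j' this] at hg
        cases hg


-- key log inequality : log u ≤ (u - u⁻¹)/2 for u ≥ 1
lemma log_le_half_sub_inv {u : ℝ} (hu : 1 ≤ u) : Real.log u ≤ (u - u⁻¹) / 2 := by
  have hmono : MonotoneOn (fun t : ℝ => (t - t⁻¹) / 2 - Real.log t) (Set.Ici 1) := by
    have hderiv : ∀ t ∈ interior (Set.Ici (1:ℝ)),
        0 ≤ deriv (fun t : ℝ => (t - t⁻¹) / 2 - Real.log t) t := by
      intro t ht
      rw [interior_Ici] at ht
      have ht0 : (0:ℝ) < t := lt_trans one_pos ht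
      have h1 : HasDerivAt (fun t : ℝ => (t - t⁻¹) / 2 - Real.log t)
          ((1 - -(t^2)⁻¹) / 2 - t⁻¹) t := by
        have ha : HasDerivAt (fun t : ℝ => t - t⁻¹) (1 - -(t^2)⁻¹) t :=
          (hasDerivAt_id t).sub (hasDerivAt_inv (ne_of_gt ht0))
        have hb := ha.div_const 2
        exact hb.sub (Real.hasDerivAt_log (ne_of_gt ht0))
      rw [h1.deriv]
      have h2 : (1 - -(t^2)⁻¹) / 2 - t⁻¹ = (1 - t⁻¹)^2 / 2 := by
        have : t ≠ 0 := ne_of_gt ht0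
        field_simp
        ring
      rw [h2]
      positivity
    exact monotoneOn_of_deriv_nonneg (convex_Ici 1)
      (by
        apply ContinuousOn.sub
        · exact (continuousOn_id.sub (continuousOn_inv₀.mono (by
            intro x hx; simp only [Set.mem_Ici] at hx
            simp only [Set.mem_compl_iff, Set.mem_singleton_iff]
            intro h; rw [h] at hx; linarith))).div_const 2
        · exact Real.continuousOn_log.mono (by
            intro x hx; simp only [Set.mem_Ici] at hx
            simp only [Set.mem_compl_iff, Set.mem_singleton_iff]
            intro h; rw [h] at hx; linarith))
      (by
        intro t ht
        rw [interior_Ici] at ht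
        have ht0 : (0:ℝ) < t := lt_trans one_pos ht
        have ha : HasDerivAt (fun t : ℝ => t - t⁻¹) (1 - -(t^2)⁻¹) t :=
          (hasDerivAt_id t).sub (hasDerivAt_inv (ne_of_gt ht0))
        exact ((ha.div_const 2).sub (Real.hasDerivAt_log (ne_of_gt ht0))).differentiableAt
          |>.differentiableWithinAt)
      hderiv
  have h0 := hmono (Set.mem_Ici.mpr le_rfl) (Set.mem_Ici.mpr hu) hu
  simp only [inv_one, Real.log_one] at h0
  linarith

lemma chernoff_maj {Ω : Type*} [MeasurableSpace Ω] (μ : Measure Ω) [IsProbabilityMeasure μ]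
    (c : ℕ) (Z : Fin c → Ω → Bool) (hZm : ∀ s, Measurable (Z s))
    (hprod : ∀ v : Fin c → Bool,
      μ {ω | ∀ s, Z s ω = v s} = ∏ s, μ {ω | Z s ω = v s})
    (b : Bool) (p₀ : ℝ) (hp₀ : 1/2 < p₀) (hp₀1 : p₀ ≤ 1)
    (hq : ∀ s, ENNReal.ofReal p₀ ≤ μ {ω | Z s ω = b}) :
    μ {ω | decide (c < 2 * (Finset.univ.filter (fun s => Z s ω = true)).card) ≠ b}
      ≤ ENNReal.ofReal (Real.exp (-(c * (p₀ - 1/2 - Real.log (2*p₀) / 2)))) := by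
  classical
  set x : ℝ := (2*p₀)⁻¹ with hxdef
  have hx0 : 0 < x := by positivity
  have hx1 : x < 1 := by
    rw [hxdef]
    rw [inv_lt_one_iff₀]
    right; linarith
  -- basic measure facts
  have hAm : ∀ (s : Fin c) (t : Bool), MeasurableSet {ω | Z s ω = t} := fun s t =>
    (hZm s) (measurableSet_singleton t)
  have hne : ∀ (s : Fin c) (t : Bool), μ {ω | Z s ω = t} ≠ ⊤ := fun s t =>
    (measure_lt_top μ _).ne
  set W : Fin c → Bool → ℝ := fun s t => (μ {ω | Z s ω = t}).toReal with hWdef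
  have hW0 : ∀ s t, 0 ≤ W s t := fun s t => ENNReal.toReal_nonneg
  have hWsum : ∀ s, W s true + W s false = 1 := by
    intro s
    have hcompl : {ω | Z s ω = false} = {ω | Z s ω = true}ᶜ := by
      ext ω; simp
    have := measure_add_measure_compl (μ := μ) (hAm s true)
    rw [← hcompl] at this
    have h' := congrArg ENNReal.toReal this
    rw [ENNReal.toReal_add (hne s true) (hne s false), measure_univ] at h'
    simpa using h'
  have hWb : ∀ s, p₀ ≤ W s b := by
    intro s
    have := hq s
    have h2 : (ENNReal.ofReal p₀).toReal ≤ (μ {ω | Z s ω = b}).toReal :=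
      ENNReal.toReal_mono (hne s b) this
    rwa [ENNReal.toReal_ofReal (by linarith)] at h2
  have hWnb : ∀ s, W s (!b) = 1 - W s b := by
    intro s
    cases b
    · simp only [Bool.not_false]
      have := hWsum s; linarith
    · simp only [Bool.not_true]
      have := hWsum s; linarith
  have hW1 : ∀ s t, W s t ≤ 1 := by
    intro s t
    have := hWsum s
    have h1 := hW0 s true
    have h2 := hW0 s false
    cases t <;> linarith
  -- decompose the event
  set Bad : Finset (Fin c → Bool) :=
    Finset.univ.filter
      (fun v => decide (c < 2 * (Finset.univ.filter (fun s => v s = true)).card) ≠ b)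
    with hBaddef
  set A : (Fin c → Bool) → Set Ω := fun v => {ω | ∀ s, Z s ω = v s} with hAdef
  have hEeq : {ω | decide (c < 2 * (Finset.univ.filter (fun s => Z s ω = true)).card) ≠ b}
      = ⋃ v ∈ Bad, A v := by
    ext ω
    simp only [Set.mem_setOf_eq, Set.mem_iUnion, hBaddef, Finset.mem_filter,
      Finset.mem_univ, true_and, hAdef]
    constructor
    · intro hω
      exact ⟨fun s => Z s ω, hω, fun s => rfl⟩
    · rintro ⟨v, hv, hvs⟩
      simp only [hvs]
      exact hv
  have hAmeas : ∀ v, MeasurableSet (A v) := by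
    intro v
    have : A v = ⋂ s, {ω | Z s ω = v s} := by
      ext ω; simp [hAdef]
    rw [this]
    exact MeasurableSet.iInter fun s => hAm s (v s)
  have hdisj : (↑Bad : Set (Fin c → Bool)).PairwiseDisjoint A := by
    intro u hu v hv huv
    refine Set.disjoint_left.mpr ?_
    intro ω hωu hωv
    exact huv (funext fun s => ((hωu s).symm.trans (hωv s)))
  have hμE : μ {ω | decide (c < 2 * (Finset.univ.filter (fun s => Z s ω = true)).card) ≠ b}
      = ∑ v ∈ Bad, μ (A v) := by
    rw [hEeq]
    exact measure_biUnion_finset hdisj fun v _ => hAmeas v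
  have hμA : ∀ v, (μ (A v)).toReal = ∏ s, W s (v s) := by
    intro v
    rw [hAdef]
    simp only []
    rw [hprod v, ENNReal.toReal_prod]
  -- to real
  have hEne : ∀ v ∈ Bad, μ (A v) ≠ ⊤ := fun v _ => (measure_lt_top μ _).ne
  have hEtoReal : (μ {ω | decide (c < 2 * (Finset.univ.filter
      (fun s => Z s ω = true)).card) ≠ b}).toReal = ∑ v ∈ Bad, ∏ s, W s (v s) := by
    rw [hμE, ENNReal.toReal_sum hEne]
    exact Finset.sum_congr rfl fun v _ => hμA v
  -- count of correct coordinates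
  have hK : ∀ v ∈ Bad, 2 * (Finset.univ.filter (fun s => v s = b)).card ≤ c := by
    intro v hv
    rw [hBaddef, Finset.mem_filter] at hv
    have hsplit := Finset.card_filter_add_card_filter_not
      (s := (Finset.univ : Finset (Fin c))) (p := fun s => v s = true)
    have hfalse : Finset.univ.filter (fun s => ¬ (v s = true))
        = Finset.univ.filter (fun s => v s = false) := by
      apply Finset.filter_congr
      intro s _
      simp
    rw [hfalse] at hsplit
    rw [Finset.card_univ, Fintype.card_fin] at hsplit
    cases b
    · -- b = false : failure means c < 2 * #true
      have hlt : c < 2 * (Finset.univ.filter (fun s => v s = true)).card := by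
        by_contra hcon
        exact hv.2 (by simp [hcon])
      omega
    · -- b = true : failure means ¬ (c < 2 * #true)
      have hle : ¬ (c < 2 * (Finset.univ.filter (fun s => v s = true)).card) := by
        by_contra hcon
        exact hv.2 (by simp [hcon])
      omega
  -- Chernoff weighting
  have hxpow : ∀ v ∈ Bad, x ^ ((c:ℝ)/2) ≤ ∏ s, (if v s = b then x else 1) := by
    intro v hv
    have hprodite : ∏ s, (if v s = b then x else 1)
        = x ^ (Finset.univ.filter (fun s => v s = b)).card := by
      rw [Finset.prod_ite (fun _ => x) (fun _ => 1)]
      simp [Finset.prod_const]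
    rw [hprodite, ← Real.rpow_natCast x]
    apply Real.rpow_le_rpow_of_exponent_ge hx0 hx1.le
    have := hK v hv
    have hcast : 2 * ((Finset.univ.filter (fun s => v s = b)).card : ℝ) ≤ (c : ℝ) := by
      exact_mod_cast this
    linarith
  -- per-factor identity and bound
  have hfact : ∀ s : Fin c,
      (if true = b then x else 1) * W s true + (if false = b then x else 1) * W s false
        = x * W s b + (1 - W s b) := by
    intro s
    have := hWsum s
    cases b
    · rw [if_neg (by decide), if_pos rfl]
      linear_combination this
    · rw [if_pos rfl, if_neg (by decide)]
      linear_combination this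
  have hfactbd : ∀ s : Fin c, x * W s b + (1 - W s b) ≤ 1 - p₀ * (1 - x) := by
    intro s
    have h1 := hWb s
    nlinarith [hx1.le]
  have hfact0 : ∀ s : Fin c, 0 ≤ x * W s b + (1 - W s b) := by
    intro s
    have := hW0 s b
    have := hW1 s b
    nlinarith [hx0.le]
  -- the main chain
  have hchain : ∑ v ∈ Bad, ∏ s, W s (v s)
      ≤ x ^ (-((c:ℝ)/2)) * (1 - p₀ * (1 - x)) ^ c := by
    have step1 : ∀ v ∈ Bad, ∏ s, W s (v s)
        ≤ x ^ (-((c:ℝ)/2)) * ∏ s, ((if v s = b then x else 1) * W s (v s)) := by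
      intro v hv
      rw [Finset.prod_mul_distrib]
      have h1 : x ^ ((c:ℝ)/2) * ∏ s, W s (v s)
          ≤ (∏ s, (if v s = b then x else 1)) * ∏ s, W s (v s) :=
        mul_le_mul_of_nonneg_right (hxpow v hv)
          (Finset.prod_nonneg fun s _ => hW0 s (v s))
      have h2 : x ^ (-((c:ℝ)/2)) * (x ^ ((c:ℝ)/2) * ∏ s, W s (v s))
          ≤ x ^ (-((c:ℝ)/2)) * ((∏ s, (if v s = b then x else 1)) * ∏ s, W s (v s)) :=
        mul_le_mul_of_nonneg_left h1 (Real.rpow_nonneg hx0.le _)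
      calc ∏ s, W s (v s)
          = x ^ (-((c:ℝ)/2)) * (x ^ ((c:ℝ)/2) * ∏ s, W s (v s)) := by
            rw [← mul_assoc, ← Real.rpow_add hx0]
            norm_num
        _ ≤ _ := h2
    calc ∑ v ∈ Bad, ∏ s, W s (v s)
        ≤ ∑ v ∈ Bad, x ^ (-((c:ℝ)/2)) * ∏ s, ((if v s = b then x else 1) * W s (v s)) :=
          Finset.sum_le_sum step1
      _ ≤ ∑ v : Fin c → Bool, x ^ (-((c:ℝ)/2))
            * ∏ s, ((if v s = b then x else 1) * W s (v s)) := by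
          apply Finset.sum_le_sum_of_subset_of_nonneg (Finset.subset_univ _)
          intro v _ _
          apply mul_nonneg (Real.rpow_nonneg hx0.le _)
          apply Finset.prod_nonneg
          intro s _
          apply mul_nonneg _ (hW0 s (v s))
          split <;> [exact hx0.le; norm_num]
      _ = x ^ (-((c:ℝ)/2)) * ∑ v : Fin c → Bool,
            ∏ s, ((if v s = b then x else 1) * W s (v s)) := by
          exact (Finset.mul_sum _ _ _).symm
      _ = x ^ (-((c:ℝ)/2)) * ∏ s, ∑ t : Bool, ((if t = b then x else 1) * W s t) := by
          congr 1
          exact (Fintype.prod_sum fun (s : Fin c) (t : Bool) =>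
            (if t = b then x else 1) * W s t).symm
      _ = x ^ (-((c:ℝ)/2)) * ∏ s, ((if true = b then x else 1) * W s true
            + (if false = b then x else 1) * W s false) := by
          congr 1
          exact Finset.prod_congr rfl fun s _ => by rw [Fintype.sum_bool]
      _ ≤ x ^ (-((c:ℝ)/2)) * (1 - p₀ * (1 - x)) ^ c := by
          apply mul_le_mul_of_nonneg_left _ (Real.rpow_nonneg hx0.le _)
          calc ∏ s, ((if true = b then x else 1) * W s true
                + (if false = b then x else 1) * W s false)
              = ∏ s : Fin c, (x * W s b + (1 - W s b)) :=
                Finset.prod_congr rfl fun s _ => hfact s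
            _ ≤ ∏ s : Fin c, (1 - p₀ * (1 - x)) :=
                Finset.prod_le_prod (fun s _ => hfact0 s) (fun s _ => hfactbd s)
            _ = (1 - p₀ * (1 - x)) ^ c := by
                rw [Finset.prod_const, Finset.card_univ, Fintype.card_fin]
  -- identify the exponential bound
  have hfinal : x ^ (-((c:ℝ)/2)) * (1 - p₀ * (1 - x)) ^ c
      ≤ Real.exp (-(c * (p₀ - 1/2 - Real.log (2*p₀) / 2))) := by
    have h1 : (1 - p₀ * (1 - x)) ^ c ≤ Real.exp (-(p₀ * (1 - x))) ^ c := by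
      apply pow_le_pow_left₀ (by nlinarith [hx0.le])
      linarith [Real.add_one_le_exp (-(p₀ * (1 - x)))]
    have h2 : x ^ (-((c:ℝ)/2)) * (1 - p₀ * (1 - x)) ^ c
        ≤ x ^ (-((c:ℝ)/2)) * Real.exp (-(p₀ * (1 - x))) ^ c :=
      mul_le_mul_of_nonneg_left h1 (Real.rpow_nonneg hx0.le _)
    refine h2.trans (le_of_eq ?_)
    rw [← Real.exp_nat_mul, Real.rpow_def_of_pos hx0, ← Real.exp_add]
    congr 1
    have hlogx : Real.log x = - Real.log (2*p₀) := by
      rw [hxdef, Real.log_inv]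
    have hpx : p₀ * (1 - x) = p₀ - 1/2 := by
      rw [hxdef]
      field_simp
    rw [hlogx, hpx]
    ring
  -- conclude
  have hnet : (μ {ω | decide (c < 2 * (Finset.univ.filter
      (fun s => Z s ω = true)).card) ≠ b}).toReal
      ≤ Real.exp (-(c * (p₀ - 1/2 - Real.log (2*p₀) / 2))) := by
    rw [hEtoReal]
    exact hchain.trans hfinal
  calc μ {ω | decide (c < 2 * (Finset.univ.filter (fun s => Z s ω = true)).card) ≠ b}
      = ENNReal.ofReal ((μ {ω | decide (c < 2 * (Finset.univ.filter
          (fun s => Z s ω = true)).card) ≠ b}).toReal) :=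
        (ENNReal.ofReal_toReal (measure_lt_top μ _).ne).symm
    _ ≤ ENNReal.ofReal (Real.exp (-(c * (p₀ - 1/2 - Real.log (2*p₀) / 2)))) :=
        ENNReal.ofReal_le_ofReal hnet

/-- Theorem 2: With a `(d−1)`-disjunct gating matrix `𝒢`, a defective
set `G` with `|G| ≤ d`, noiseless block outcomes `b w i`, and mutually independent
noisy observations `Y (w, i, s)` each agreeing with `b w i` with probability at least
`p₀`, where `1/2 + ξ ≤ (1 − lam) p₀` and `c ≥ 2 ln(2hm/δ)/(p₀ lam²)`, coordinatewise
strict-majority voting followed by SAFFRON column matching outputs exactly the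
defective set `G` with probability at least `1 − δ`. -/
theorem decode_d_defectives {Ω : Type*} [MeasurableSpace Ω] (μ : Measure Ω)
    [IsProbabilityMeasure μ] (m : ℕ) (hm : 1 ≤ m) {d h : ℕ}
    (hd : 1 ≤ d) (hdN : d < 2 ^ m) (hh : 1 ≤ h)
    (𝒢 : Fin h → Fin (2 ^ m) → Bool) (h𝒢 : Disjunct 𝒢 (d - 1))
    (G : Finset (Fin (2 ^ m))) (hG : G.card ≤ d)
    (p₀ lam ξ δ : ℝ) (hp₀0 : 0 < p₀) (hp₀1 : p₀ ≤ 1)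
    (hlam0 : 0 < lam) (hlam1 : lam < 1) (hξ : 0 < ξ)
    (hcond : 1 / 2 + ξ ≤ (1 - lam) * p₀) (hδ0 : 0 < δ) (hδ1 : δ < 1)
    (c : ℕ) (hc : 1 ≤ c)
    (hclb : 2 * Real.log (2 * h * m / δ) / (p₀ * lam ^ 2) ≤ (c : ℝ))
    (Y : Fin h × Fin (2 * m) × Fin c → Ω → Bool) (hmeas : ∀ p, Measurable (Y p))
    (hindep : iIndepFun Y μ)
    (hp : ∀ (w : Fin h) (i : Fin (2 * m)) (s : Fin c),
      ENNReal.ofReal p₀ ≤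
        μ {ω | Y (w, i, s) ω
            = decide (∃ j ∈ G, 𝒢 w j = true ∧ saffron m i j = true)}) :
    ENNReal.ofReal (1 - δ) ≤
      μ {ω | ∀ j : Fin (2 ^ m),
        (∃ w : Fin h,
          (fun i : Fin (2 * m) =>
              decide (c < 2 * (Finset.univ.filter
                (fun s : Fin c => Y (w, i, s) ω = true)).card))
            = fun i : Fin (2 * m) => saffron m i j) ↔ j ∈ G} := by
  classical
  -- basic inequalities
  have hp12 : 1/2 < p₀ := by nlinarith [mul_pos hlam0 hp₀0]
  have hlam2p : lam * (2*p₀) ≤ 2*p₀ - 1 := by nlinarith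
  -- key exponent bound
  set F : ℝ := p₀ - 1/2 - Real.log (2*p₀) / 2 with hFdef
  have hFkey : p₀ * lam^2 / 2 ≤ F := by
    have hlog := log_le_half_sub_inv (u := 2*p₀) (by linarith)
    have hinv : (2*p₀) * (2*p₀)⁻¹ = 1 := mul_inv_cancel₀ (by linarith)
    have hsq : (lam * (2*p₀))^2 ≤ (2*p₀-1)^2 := by
      apply pow_le_pow_left₀ (by positivity) hlam2p
    nlinarith [hinv, hsq]
  -- block error events
  set b : Fin h → Fin (2 * m) → Bool := fun w i =>
    decide (∃ j ∈ G, 𝒢 w j = true ∧ saffron m i j = true) with hbdef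
  set E : Fin h × Fin (2 * m) → Set Ω := fun p =>
    {ω | decide (c < 2 * (Finset.univ.filter
      (fun s : Fin c => Y (p.1, p.2, s) ω = true)).card) ≠ b p.1 p.2} with hEdef
  -- each block error event has small probability
  have hEbound : ∀ p : Fin h × Fin (2 * m),
      μ (E p) ≤ ENNReal.ofReal (Real.exp (-(c * F))) := by
    rintro ⟨w, i⟩
    have hprod : ∀ v : Fin c → Bool,
        μ {ω | ∀ s, Y (w, i, s) ω = v s} = ∏ s, μ {ω | Y (w, i, s) ω = v s} := by
      intro v
      have hinj : Function.Injective (fun s : Fin c => ((w, i, s) : Fin h × Fin (2*m) × Fin c)) := by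
        intro a b hab
        simpa [Prod.ext_iff] using hab
      have := hindep.measure_inter_preimage_eq_mul
        (Finset.univ.image (fun s : Fin c => ((w, i, s) : Fin h × Fin (2*m) × Fin c)))
        (sets := fun p => ({v p.2.2} : Set Bool))
        (fun p _ => measurableSet_singleton _)
      rw [Finset.prod_image (fun a _ b _ hab => hinj hab)] at this
      have hseteq : (⋂ p ∈ Finset.univ.image
            (fun s : Fin c => ((w, i, s) : Fin h × Fin (2*m) × Fin c)),
            Y p ⁻¹' {v p.2.2}) = {ω | ∀ s, Y (w, i, s) ω = v s} := by
        ext ω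
        simp only [Set.mem_iInter, Finset.mem_image, Finset.mem_univ, true_and,
          Set.mem_preimage, Set.mem_singleton_iff, Set.mem_setOf_eq]
        constructor
        · intro hω s
          exact hω (w, i, s) ⟨s, rfl⟩
        · rintro hω p ⟨s, rfl⟩
          exact hω s
      rw [hseteq] at this
      rw [this]
      rfl
    exact chernoff_maj μ c (fun s => Y (w, i, s)) (fun s => hmeas _) hprod
      (b w i) p₀ hp12 hp₀1 (fun s => hp w i s)
  -- numerical bound on the exponential
  have hhm0 : (0:ℝ) < 2 * h * m := by
    have : (1:ℝ) ≤ h := by exact_mod_cast hh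
    have : (1:ℝ) ≤ m := by exact_mod_cast hm
    positivity
  have hA0 : (0:ℝ) < 2 * h * m / δ := by positivity
  have hexp : Real.exp (-(c * F)) ≤ δ / (2 * h * m) := by
    have hplam : 0 < p₀ * lam^2 := by positivity
    have hlogle : Real.log (2 * h * m / δ) ≤ c * (p₀ * lam^2 / 2) := by
      rw [div_le_iff₀ hplam] at hclb
      nlinarith
    have hcF : Real.log (2 * h * m / δ) ≤ c * F := by
      have hc0 : (0:ℝ) ≤ c := Nat.cast_nonneg c
      nlinarith
    calc Real.exp (-(c * F)) ≤ Real.exp (-(Real.log (2 * h * m / δ))) :=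
          Real.exp_le_exp.mpr (by linarith)
      _ = δ / (2 * h * m) := by
          rw [Real.exp_neg, Real.exp_log hA0, inv_div]
  have hEbound' : ∀ p : Fin h × Fin (2 * m),
      μ (E p) ≤ ENNReal.ofReal (δ / (2 * h * m)) :=
    fun p => (hEbound p).trans (ENNReal.ofReal_le_ofReal hexp)
  -- union bound
  have hunion : μ (⋃ p, E p) ≤ ENNReal.ofReal δ := by
    calc μ (⋃ p, E p) ≤ ∑ p : Fin h × Fin (2 * m), μ (E p) :=
          measure_iUnion_fintype_le μ E
      _ ≤ ∑ _p : Fin h × Fin (2 * m), ENNReal.ofReal (δ / (2 * h * m)) :=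
          Finset.sum_le_sum fun p _ => hEbound' p
      _ = (Fintype.card (Fin h × Fin (2 * m))) • ENNReal.ofReal (δ / (2 * h * m)) := by
          rw [Finset.sum_const, Finset.card_univ]
      _ = ENNReal.ofReal δ := by
          rw [Fintype.card_prod, Fintype.card_fin, Fintype.card_fin, nsmul_eq_mul,
            ← ENNReal.ofReal_natCast, ← ENNReal.ofReal_mul (by positivity)]
          congr 1
          push_cast
          field_simp
  -- measurability of the error events
  have hEmeas : ∀ p : Fin h × Fin (2 * m), MeasurableSet (E p) := by
    rintro ⟨w, i⟩
    have hV : Measurable (fun ω => (fun s : Fin c => Y (w, i, s) ω)) :=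
      measurable_pi_lambda _ fun s => hmeas _
    have hg : Measurable (fun ω => decide (c < 2 * (Finset.univ.filter
        (fun s : Fin c => Y (w, i, s) ω = true)).card)) := by
      exact (measurable_of_countable (fun v : Fin c → Bool =>
        decide (c < 2 * (Finset.univ.filter (fun s : Fin c => v s = true)).card))).comp hV
    exact hg (measurableSet_singleton (b w i)) |>.compl
  -- the complement of the union is contained in the target event
  have hsubset : (⋃ p, E p)ᶜ ⊆ {ω | ∀ j : Fin (2 ^ m),
      (∃ w : Fin h,
        (fun i : Fin (2 * m) =>
            decide (c < 2 * (Finset.univ.filter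
              (fun s : Fin c => Y (w, i, s) ω = true)).card))
          = fun i : Fin (2 * m) => saffron m i j) ↔ j ∈ G} := by
    intro ω hω
    simp only [Set.mem_compl_iff, Set.mem_iUnion, not_exists] at hω
    intro j
    have hv : ∀ (w : Fin h) (i : Fin (2 * m)),
        (fun w i => decide (c < 2 * (Finset.univ.filter
          (fun s : Fin c => Y (w, i, s) ω = true)).card)) w i
          = decide (∃ j ∈ G, 𝒢 w j = true ∧ saffron m i j = true) := by
      intro w i
      have := hω (w, i)
      rw [hEdef] at this
      simp only [Set.mem_setOf_eq, ne_eq, not_not] at this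
      exact this
    exact det_decode m hm hd hdN hh 𝒢 h𝒢 G hG _ hv j
  -- conclude
  calc ENNReal.ofReal (1 - δ)
      = 1 - ENNReal.ofReal δ := by
        rw [← ENNReal.ofReal_one, ← ENNReal.ofReal_sub _ hδ0.le]
    _ ≤ 1 - μ (⋃ p, E p) := tsub_le_tsub_left hunion 1
    _ = μ ((⋃ p, E p)ᶜ) :=
        (prob_compl_eq_one_sub (MeasurableSet.iUnion fun p => hEmeas p)).symm
    _ ≤ _ := measure_mono hsubset
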